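/- Let f, g : ℝ^n → ℝ be continuous and τ-strongly convex (τ > 0), let η > 0 and x ∈ ℝ^n. Let u_f be the unique minimizer of u ↦ f(u) + (1/(2η))‖u − x‖² and u_g the unique minimizer of u ↦ g(u) + (1/(2η))‖u − x‖². Then f(u_g) − g(u_g) + g(u_f) − f(u_f) ≥ (τ + 1/η)·‖u_f − u_g‖². -/

import Mathlib

noncomputable section

section Aux

variable {E : Type*} [NormedAddCommGroup E] [InnerProductSpace ℝ E]

/-- Quadratic `u ↦ c * ‖u - x‖²` is `2c`-strongly convex. -/
lemma quad_strongConvexOn (c : ℝ) (hc : 0 < c) (x : E) :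
    StrongConvexOn Set.univ (2 * c) (fun u => c * ‖u - x‖ ^ 2) := by
  rw [strongConvexOn_iff_convex]
  have heq : (fun u : E => c * ‖u - x‖ ^ 2 - 2 * c / 2 * ‖u‖ ^ 2)
      = fun u : E => c * ‖x‖ ^ 2 - 2 * c * inner ℝ u x := by
    funext u
    rw [show (‖u - x‖ : ℝ) ^ 2 = ‖u - x‖ ^ 2 from rfl, norm_sub_sq_real]
    ring
  rw [heq]
  refine ⟨convex_univ, fun u _ v _ a b ha hb hab => ?_⟩
  simp only [smul_eq_mul]
  rw [inner_add_left, real_inner_smul_left, real_inner_smul_left]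
  have hb1 : b = 1 - a := by linarith
  subst hb1
  exact le_of_eq (by ring)

/-- A minimizer of an `m`-strongly convex function satisfies a quadratic growth bound. -/
lemma strong_min_bound {m : ℝ} {F : E → ℝ} (hF : StrongConvexOn Set.univ m F)
    (u0 : E) (hmin : ∀ u, F u0 ≤ F u) (u : E) :
    m / 2 * ‖u - u0‖ ^ 2 ≤ F u - F u0 := by
  have key : ∀ t ∈ Set.Ioo (0:ℝ) 1, m / 2 * (1 - t) * ‖u - u0‖ ^ 2 ≤ F u - F u0 := by
    intro t ht
    obtain ⟨ht0, ht1⟩ := ht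
    have h2 := hF.2 (Set.mem_univ u0) (Set.mem_univ u)
      (show (0:ℝ) ≤ 1 - t by linarith) (le_of_lt ht0) (by ring)
    have h3 := hmin ((1 - t) • u0 + t • u)
    simp only [smul_eq_mul] at h2
    have hn : ‖u0 - u‖ = ‖u - u0‖ := norm_sub_rev _ _
    rw [hn] at h2
    nlinarith
  have htend : Filter.Tendsto (fun t : ℝ => m / 2 * (1 - t) * ‖u - u0‖ ^ 2)
      (nhdsWithin 0 (Set.Ioi 0)) (nhds (m / 2 * ‖u - u0‖ ^ 2)) := by
    have : Filter.Tendsto (fun t : ℝ => m / 2 * (1 - t) * ‖u - u0‖ ^ 2)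
        (nhds 0) (nhds (m / 2 * (1 - 0) * ‖u - u0‖ ^ 2)) := by
      apply Continuous.tendsto
      continuity
    simpa using this.mono_left nhdsWithin_le_nhds
  refine le_of_tendsto htend ?_
  filter_upwards [Ioo_mem_nhdsGT_of_mem (by norm_num : (0:ℝ) ∈ Set.Ico (0:ℝ) 1)] with t ht
  exact key t ht

end Aux

/-- Strong monotonicity bound for proximal points of two
`τ`-strongly convex functions at the same base point. -/
theorem prox_points_strong_monotonicity
    {n : ℕ} (f g : EuclideanSpace ℝ (Fin n) → ℝ)
    (τ η : ℝ) (hτ : 0 < τ) (hη : 0 < η)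
    (hfcont : Continuous f) (hgcont : Continuous g)
    (hfsc : StrongConvexOn Set.univ τ f) (hgsc : StrongConvexOn Set.univ τ g)
    (x uf ug : EuclideanSpace ℝ (Fin n))
    (huf : ∀ u, f uf + (1 / (2 * η)) * ‖uf - x‖ ^ 2 ≤ f u + (1 / (2 * η)) * ‖u - x‖ ^ 2)
    (hug : ∀ u, g ug + (1 / (2 * η)) * ‖ug - x‖ ^ 2 ≤ g u + (1 / (2 * η)) * ‖u - x‖ ^ 2) :
    (τ + 1 / η) * ‖uf - ug‖ ^ 2 ≤ f ug - g ug + g uf - f uf := by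
  set q : EuclideanSpace ℝ (Fin n) → ℝ := fun u => (1 / (2 * η)) * ‖u - x‖ ^ 2 with hq
  have hc : (0:ℝ) < 1 / (2 * η) := by positivity
  have hqsc : StrongConvexOn Set.univ (2 * (1 / (2 * η))) q := quad_strongConvexOn _ hc x
  have hFsc : StrongConvexOn Set.univ (τ + 1 / η) (f + q) := by
    have := hfsc.add hqsc
    have hmod : (fun r : ℝ => τ / 2 * r ^ 2) + (fun r : ℝ => 2 * (1 / (2 * η)) / 2 * r ^ 2)
        = fun r : ℝ => (τ + 1 / η) / 2 * r ^ 2 := by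
      funext r
      simp only [Pi.add_apply]
      field_simp
    rwa [StrongConvexOn, ← hmod]
  have hGsc : StrongConvexOn Set.univ (τ + 1 / η) (g + q) := by
    have := hgsc.add hqsc
    have hmod : (fun r : ℝ => τ / 2 * r ^ 2) + (fun r : ℝ => 2 * (1 / (2 * η)) / 2 * r ^ 2)
        = fun r : ℝ => (τ + 1 / η) / 2 * r ^ 2 := by
      funext r
      simp only [Pi.add_apply]
      field_simp
    rwa [StrongConvexOn, ← hmod]
  have h1 := strong_min_bound hFsc uf (fun u => huf u) ug
  have h2 := strong_min_bound hGsc ug (fun u => hug u) uf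
  simp only [Pi.add_apply, hq] at h1 h2
  have hn : ‖ug - uf‖ = ‖uf - ug‖ := norm_sub_rev _ _
  rw [hn] at h1
  nlinarith
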